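/- arXiv:1606.09113 — 4 statements merged into one kernel-verified Lean document; each statement's English description precedes it below -/
import Mathlib

section
/- For every z ∈ ℤ, the d-dimensional Lebesgue measure of the simplex L_z satisfies meas_d(L_z) = |p| · meas_{d−1}(K), where meas_{d−1}(K) is the (d−1)-dimensional Lebesgue measure of K in ℝ^{d−1}. -/
open MeasureTheory Set Pointwise

/-- The corner simplex `{x | x ≥ 0, ∑ x ≤ 1}`. -/
def cornerSimplex (n : ℕ) : Set (Fin n → ℝ) :=
  {x | (∀ i, 0 ≤ x i) ∧ ∑ i, x i ≤ 1}

lemma isClosed_cornerSimplex (n : ℕ) : IsClosed (cornerSimplex n) := by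
  have h1 : IsClosed {x : Fin n → ℝ | ∀ i, 0 ≤ x i} := by
    have : {x : Fin n → ℝ | ∀ i, 0 ≤ x i} = ⋂ i, {x | 0 ≤ x i} := by
      ext x; simp
    rw [this]
    exact isClosed_iInter fun i => isClosed_le continuous_const (continuous_apply i)
  have h2 : IsClosed {x : Fin n → ℝ | ∑ i, x i ≤ 1} :=
    isClosed_le (by continuity) continuous_const
  rw [cornerSimplex, setOf_and]
  exact h1.inter h2

lemma smul_cornerSimplex {n : ℕ} {t : ℝ} (ht : 0 ≤ t) :
    t • cornerSimplex n = {x | (∀ i, 0 ≤ x i) ∧ ∑ i, x i ≤ t} := by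
  rcases eq_or_lt_of_le ht with h | h
  · subst h
    have hne : (cornerSimplex n).Nonempty := ⟨0, fun i => le_rfl, by simp⟩
    rw [zero_smul_set hne]
    ext x
    simp only [mem_setOf_eq, Set.mem_zero]
    constructor
    · rintro rfl; exact ⟨fun i => le_rfl, by simp⟩
    · rintro ⟨h1, h2⟩
      have hs : ∑ i, x i = 0 := le_antisymm h2 (Finset.sum_nonneg fun i _ => h1 i)
      have : ∀ i ∈ Finset.univ, x i = 0 :=
        (Finset.sum_eq_zero_iff_of_nonneg (fun i _ => h1 i)).mp hs
      funext i
      exact this i (Finset.mem_univ i)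
  · ext x
    rw [mem_smul_set_iff_inv_smul_mem₀ (ne_of_gt h)]
    simp only [cornerSimplex, mem_setOf_eq, Pi.smul_apply, smul_eq_mul]
    constructor
    · rintro ⟨h1, h2⟩
      refine ⟨fun i => ?_, ?_⟩
      · have h3 := h1 i
        by_contra hx
        push_neg at hx
        have : t⁻¹ * x i < 0 := mul_neg_of_pos_of_neg (by positivity) hx
        linarith
      · have : ∑ i, t⁻¹ * x i = t⁻¹ * ∑ i, x i := by rw [Finset.mul_sum]
        rw [this] at h2
        calc ∑ i, x i = t * (t⁻¹ * ∑ i, x i) := by field_simp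
        _ ≤ t * 1 := by nlinarith
        _ = t := mul_one t
    · rintro ⟨h1, h2⟩
      refine ⟨fun i => mul_nonneg (by positivity) (h1 i), ?_⟩
      have : ∑ i, t⁻¹ * x i = t⁻¹ * ∑ i, x i := by rw [Finset.mul_sum]
      rw [this]
      calc t⁻¹ * ∑ i, x i ≤ t⁻¹ * t := by
            apply mul_le_mul_of_nonneg_left h2 (by positivity)
      _ = 1 := by field_simp

lemma measurableSet_cornerSimplex (n : ℕ) : MeasurableSet (cornerSimplex n) :=
  (isClosed_cornerSimplex n).measurableSet

set_option maxHeartbeats 800000 in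
lemma volume_cornerSimplex (n : ℕ) :
    volume (cornerSimplex n) = ENNReal.ofReal (1 / n.factorial) := by
  induction n with
  | zero =>
      have : cornerSimplex 0 = Set.univ := by
        ext x
        simp [cornerSimplex]
      rw [this, volume_pi, Measure.pi_univ]
      simp
  | succ n ih =>
      have hmp := (volume_preserving_piFinSuccAbove (fun _ : Fin (n + 1) => ℝ) 0).symm
      set e := MeasurableEquiv.piFinSuccAbove (fun _ : Fin (n + 1) => ℝ) 0 with he
      have hmeas : MeasurableSet (cornerSimplex (n + 1)) := measurableSet_cornerSimplex _
      have h0 : volume (⇑e.symm ⁻¹' cornerSimplex (n + 1)) = volume (cornerSimplex (n + 1)) :=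
        hmp.measure_preimage hmeas.nullMeasurableSet
      rw [← h0]
      have hpre : ⇑e.symm ⁻¹' cornerSimplex (n + 1) =
          {ty : ℝ × (Fin n → ℝ) | 0 ≤ ty.1 ∧ (∀ i, 0 ≤ ty.2 i) ∧ ty.1 + ∑ i, ty.2 i ≤ 1} := by
        ext ⟨t, y⟩
        rw [MeasurableEquiv.piFinSuccAbove_symm_apply]
        simp only [Fin.insertNthEquiv, Equiv.coe_fn_mk, Fin.insertNth_zero]
        constructor
        · rintro ⟨h1, h2⟩
          rw [Fin.sum_cons] at h2
          exact ⟨h1 0, fun i => h1 i.succ, h2⟩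
        · rintro ⟨h1, h2, h3⟩
          refine ⟨fun i => ?_, by rwa [Fin.sum_cons]⟩
          rcases Fin.eq_zero_or_eq_succ i with rfl | ⟨j, rfl⟩
          · exact h1
          · simpa using h2 j
      rw [hpre]
      set S := {ty : ℝ × (Fin n → ℝ) | 0 ≤ ty.1 ∧ (∀ i, 0 ≤ ty.2 i) ∧ ty.1 + ∑ i, ty.2 i ≤ 1}
        with hSdef
      have hScl : IsClosed S := by
        rw [hSdef, setOf_and, setOf_and]
        refine IsClosed.inter (isClosed_le continuous_const continuous_fst)
          (IsClosed.inter ?_ (isClosed_le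
            (continuous_fst.add (continuous_finset_sum _ fun i _ =>
              (continuous_apply i).comp continuous_snd)) continuous_const))
        have : {ty : ℝ × (Fin n → ℝ) | ∀ i, 0 ≤ ty.2 i} = ⋂ i, {ty | 0 ≤ ty.2 i} := by
          ext x; simp
        rw [this]
        exact isClosed_iInter fun i =>
          isClosed_le continuous_const ((continuous_apply i).comp continuous_snd)
      rw [Measure.volume_eq_prod _ _, Measure.prod_apply hScl.measurableSet]
      have hslice : ∀ t : ℝ, volume (Prod.mk t ⁻¹' S)
          = Set.indicator (Icc (0:ℝ) 1)
              (fun t => ENNReal.ofReal ((1 - t) ^ n / n.factorial)) t := by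
        intro t
        by_cases ht : t ∈ Icc (0:ℝ) 1
        · have h1t : (0:ℝ) ≤ 1 - t := by linarith [ht.2]
          have hpre2 : Prod.mk t ⁻¹' S = (1 - t) • cornerSimplex n := by
            rw [smul_cornerSimplex h1t]
            ext y
            simp only [hSdef, mem_preimage, mem_setOf_eq]
            constructor
            · rintro ⟨-, h2, h3⟩; exact ⟨h2, by linarith⟩
            · rintro ⟨h2, h3⟩; exact ⟨ht.1, h2, by linarith⟩
          rw [hpre2, Measure.addHaar_smul_of_nonneg volume h1t, ih,
            Set.indicator_of_mem ht]
          rw [← ENNReal.ofReal_mul (by positivity)]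
          congr 1
          rw [Module.finrank_pi]
          simp [Fintype.card_fin]
          ring
        · rw [Set.indicator_of_notMem ht]
          have : Prod.mk t ⁻¹' S = (∅ : Set (Fin n → ℝ)) := by
            ext y
            simp only [hSdef, mem_preimage, mem_setOf_eq, mem_empty_iff_false, iff_false]
            rintro ⟨h1, h2, h3⟩
            simp only [mem_Icc, not_and, not_le] at ht
            have hsum : 0 ≤ ∑ i, y i := Finset.sum_nonneg fun i _ => h2 i
            have := ht h1
            linarith
          rw [this]
          simp
      simp_rw [hslice]
      rw [lintegral_indicator measurableSet_Icc]
      have hint : IntegrableOn (fun t : ℝ => (1 - t) ^ n / n.factorial) (Icc 0 1) volume :=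
        (Continuous.integrableOn_Icc (by continuity))
      have hnn : 0 ≤ᵐ[volume.restrict (Icc (0:ℝ) 1)]
          fun t : ℝ => (1 - t) ^ n / n.factorial := by
        refine (ae_restrict_iff' measurableSet_Icc).2 (Filter.Eventually.of_forall fun t ht => ?_)
        have : (0:ℝ) ≤ 1 - t := by linarith [ht.2]
        positivity
      rw [← ofReal_integral_eq_lintegral_ofReal hint hnn]
      congr 1
      rw [MeasureTheory.integral_Icc_eq_integral_Ioc,
        ← intervalIntegral.integral_of_le (by norm_num : (0:ℝ) ≤ 1)]
      have h1 : ∫ t in (0:ℝ)..1, (1 - t) ^ n / n.factorial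
          = (∫ t in (0:ℝ)..1, (1 - t) ^ n) / n.factorial := by
        rw [intervalIntegral.integral_div]
      have h2 : ∫ t in (0:ℝ)..1, (1 - t) ^ n = ∫ t in (0:ℝ)..1, t ^ n := by
        have := intervalIntegral.integral_comp_sub_left (fun x : ℝ => x ^ n) 1 (a := 0) (b := 1)
        simpa using this
      rw [h1, h2, integral_pow]
      have hf : ((n+1).factorial : ℝ) = (n + 1) * n.factorial := by
        rw [Nat.factorial_succ]; push_cast; ring
      rw [hf]
      have hn0 : (n.factorial : ℝ) ≠ 0 := by positivity
      field_simp
      simp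


/-- vertices of the corner simplex -/
noncomputable def vtx (n : ℕ) : Fin (n + 1) → Fin n → ℝ :=
  Fin.cons 0 (fun j => Pi.single j 1)

lemma convex_cornerSimplex (n : ℕ) : Convex ℝ (cornerSimplex n) := by
  rw [cornerSimplex, setOf_and]
  refine Convex.inter ?_ (convex_halfSpace_le
    ⟨fun x y => Finset.sum_add_distrib, fun c x => by simp [Finset.mul_sum]⟩ 1)
  have : {x : Fin n → ℝ | ∀ i, 0 ≤ x i} = Set.pi univ (fun _ => Ici (0:ℝ)) := by
    ext x
    simp only [Set.mem_pi, Set.mem_univ, Set.mem_Ici, true_implies, mem_setOf_eq]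
  rw [this]
  exact convex_pi fun i _ => convex_Ici 0

lemma single_sum {n : ℕ} {E : Type*} [AddCommGroup E] [Module ℝ E]
    (j : Fin n) (v : Fin n → E) : ∑ k, (Pi.single j (1:ℝ) : Fin n → ℝ) k • v k = v j := by
  rw [Finset.sum_eq_single j]
  · simp
  · intro k _ hk
    rw [Pi.single_apply, if_neg hk, zero_smul]
  · simp

lemma convexHull_vtx (n : ℕ) : convexHull ℝ (Set.range (vtx n)) = cornerSimplex n := by
  apply le_antisymm
  · apply convexHull_min ?_ (convex_cornerSimplex n)
    rintro _ ⟨i, rfl⟩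
    rcases Fin.eq_zero_or_eq_succ i with rfl | ⟨j, rfl⟩
    · exact ⟨fun i => by simp [vtx], by simp [vtx]⟩
    · refine ⟨fun i => ?_, ?_⟩
      · simp only [vtx, Fin.cons_succ, Pi.single_apply]
        split <;> norm_num
      · simp only [vtx, Fin.cons_succ]
        have : ∑ i, Pi.single j (1:ℝ) i = 1 := by simp
        rw [this]
  · intro x hx
    obtain ⟨hx1, hx2⟩ := hx
    set w : Fin (n+1) → ℝ := Fin.cons (1 - ∑ i, x i) x with hw
    have hw0 : ∀ i ∈ Finset.univ, 0 ≤ w i := by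
      intro i _
      rcases Fin.eq_zero_or_eq_succ i with rfl | ⟨j, rfl⟩
      · simp only [hw, Fin.cons_zero]; linarith
      · simp only [hw, Fin.cons_succ]; exact hx1 j
    have hw1 : ∑ i, w i = 1 := by
      rw [hw, Fin.sum_cons]; ring
    have hmem : Finset.univ.centerMass w (vtx n) ∈ convexHull ℝ (Set.range (vtx n)) :=
      Finset.centerMass_mem_convexHull _ hw0 (by rw [hw1]; norm_num)
        (fun i _ => Set.mem_range_self i)
    have hcm : Finset.univ.centerMass w (vtx n) = x := by
      rw [Finset.centerMass_eq_of_sum_1 _ _ hw1, Fin.sum_univ_succ]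
      simp only [hw, vtx, Fin.cons_zero, Fin.cons_succ, smul_zero, zero_add]
      funext k
      rw [Finset.sum_apply]
      simp only [Pi.smul_apply, smul_eq_mul]
      rw [Finset.sum_eq_single k]
      · simp
      · intro b _ hb
        rw [Pi.single_apply, if_neg (by exact fun h => hb (by simp [h])), mul_zero]
      · simp
    rwa [hcm] at hmem

lemma convexHull_range_fin_succ {n : ℕ} {E : Type*} [AddCommGroup E] [Module ℝ E]
    (f : Fin (n + 1) → E) :
    convexHull ℝ (Set.range f) =
      (fun x : Fin n → ℝ => f 0 + ∑ j, x j • (f j.succ - f 0)) '' cornerSimplex n := by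
  let L : (Fin n → ℝ) →ₗ[ℝ] E :=
    { toFun := fun x => ∑ j, x j • (f j.succ - f 0)
      map_add' := by intro x y; simp [add_smul, Finset.sum_add_distrib]
      map_smul' := by intro c x; simp [smul_smul, Finset.smul_sum]
    }
  let T : (Fin n → ℝ) →ᵃ[ℝ] E :=
    { toFun := fun x => f 0 + L x
      linear := L
      map_vadd' := by
        intro x v
        simp only [vadd_eq_add, map_add]
        abel }
  have h1 : f = ⇑T ∘ vtx n := by
    funext i
    rcases Fin.eq_zero_or_eq_succ i with rfl | ⟨j, rfl⟩
    · show f 0 = f 0 + L (vtx n 0)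
      simp only [vtx, Fin.cons_zero, map_zero, add_zero]
    · show f j.succ = f 0 + L (vtx n j.succ)
      simp only [vtx, Fin.cons_succ]
      show f j.succ = f 0 + ∑ k, (Pi.single j (1:ℝ) : Fin n → ℝ) k • (f k.succ - f 0)
      rw [single_sum]
      abel
  have key : convexHull ℝ (Set.range f) = ⇑T '' cornerSimplex n := by
    conv_lhs => rw [h1]
    rw [Set.range_comp, ← AffineMap.image_convexHull, convexHull_vtx]
  rw [key]
  rfl

lemma volume_image_affine {n : ℕ} (c : Fin n → ℝ) (M : Matrix (Fin n) (Fin n) ℝ)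
    (s : Set (Fin n → ℝ)) :
    volume ((fun x => c + M.mulVec x) '' s) = ENNReal.ofReal |M.det| * volume s := by
  have h1 : (fun x : Fin n → ℝ => c + M.mulVec x) '' s = c +ᵥ (⇑(Matrix.toLin' M) '' s) := by
    ext y
    simp only [Set.mem_image, Set.mem_vadd_set, Matrix.toLin'_apply, vadd_eq_add]
    constructor
    · rintro ⟨x, hx, rfl⟩; exact ⟨M.mulVec x, ⟨x, hx, rfl⟩, rfl⟩
    · rintro ⟨v, ⟨x, hx, rfl⟩, rfl⟩; exact ⟨x, hx, rfl⟩
  rw [h1, measure_vadd, Measure.addHaar_image_linearMap, LinearMap.det_toLin']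

lemma volume_convexHull_range {n : ℕ} (f : Fin (n + 1) → Fin n → ℝ) :
    volume (convexHull ℝ (Set.range f)) =
      ENNReal.ofReal |(Matrix.of fun i k => f k.succ i - f 0 i).det| *
        ENNReal.ofReal (1 / n.factorial) := by
  rw [convexHull_range_fin_succ]
  have h : (fun x : Fin n → ℝ => f 0 + ∑ j, x j • (f j.succ - f 0)) =
      fun x => f 0 + (Matrix.of fun i k => f k.succ i - f 0 i).mulVec x := by
    funext x
    congr 1
    funext i
    rw [Finset.sum_apply]
    simp only [Matrix.mulVec, dotProduct, Matrix.of_apply, Pi.smul_apply, smul_eq_mul,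
      Pi.sub_apply]
    exact Finset.sum_congr rfl fun j _ => by ring
  rw [h, volume_image_affine, volume_cornerSimplex]



/-- The point `B_j = (A_{j mod d}, j·p) ∈ ℝ^{d−1} × ℝ ≅ ℝ^d`: the first `d−1`
coordinates are those of `A_{j mod d}` and the last coordinate is `j·p`. -/
noncomputable def Bpt (d : ℕ) (A : Fin d → Fin (d - 1) → ℝ) (p : ℝ) (j : ℤ) :
    Fin d → ℝ :=
  fun i =>
    if h : (i : ℕ) < d - 1 then
      A ⟨(j % (d : ℤ)).toNat, by
        have h1 := i.isLt
        have h2 : (0 : ℤ) < (d : ℤ) := by omega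
        have h3 := Int.emod_lt_of_pos j h2
        have h4 := Int.emod_nonneg j (ne_of_gt h2)
        omega⟩ ⟨(i : ℕ), h⟩
    else (j : ℝ) * p

/-- The simplex `L_z = conv{B_z, B_{z+1}, …, B_{z+d}} ⊂ ℝ^d`. -/
noncomputable def Lsimp (d : ℕ) (A : Fin d → Fin (d - 1) → ℝ) (p : ℝ) (z : ℤ) :
    Set (Fin d → ℝ) :=
  convexHull ℝ (Set.range fun i : Fin (d + 1) => Bpt d A p (z + (i : ℕ)))


/-- `meas_d(L_z) = |p| · meas_{d−1}(K)` where `K = conv{A_0,…,A_{d−1}}`. -/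
theorem stmt13 (d : ℕ) (hd : 2 ≤ d) (A : Fin d → Fin (d - 1) → ℝ) (p : ℝ) (z : ℤ) :
    MeasureTheory.volume (Lsimp d A p z) =
      ENNReal.ofReal |p| * MeasureTheory.volume (convexHull ℝ (Set.range A)) := by
  obtain ⟨m, rfl⟩ : ∃ m, d = m + 1 := ⟨d - 1, by omega⟩
  have hmodlt : ∀ j : ℤ, (j % ((m + 1 : ℕ) : ℤ)).toNat < m + 1 := by
    intro j
    have h2 : (0 : ℤ) < ((m + 1 : ℕ) : ℤ) := by positivity
    have h3 := Int.emod_lt_of_pos j h2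
    have h4 := Int.emod_nonneg j (ne_of_gt h2)
    omega
  set σ : Fin (m + 1) → Fin (m + 1) := fun j =>
    ⟨((z + (j : ℕ)) % ((m + 1 : ℕ) : ℤ)).toNat, hmodlt _⟩ with hσ
  -- evaluation of Bpt
  have hBlt : ∀ (j : ℤ) (i : Fin (m + 1)) (h : (i : ℕ) < m),
      Bpt (m + 1) A p j i = A ⟨(j % ((m + 1 : ℕ) : ℤ)).toNat, hmodlt j⟩ ⟨(i : ℕ), h⟩ := by
    intro j i h
    simp only [Bpt, Nat.add_sub_cancel]
    rw [dif_pos h]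
  have hBlast : ∀ j : ℤ, Bpt (m + 1) A p j (Fin.last m) = (j : ℝ) * p := by
    intro j
    simp only [Bpt, Nat.add_sub_cancel, Fin.val_last]
    rw [dif_neg (lt_irrefl m)]
  -- surjectivity of σ
  have hσsurj : Function.Surjective σ := by
    intro y
    have h2 : (0 : ℤ) < ((m + 1 : ℕ) : ℤ) := by positivity
    refine ⟨⟨((((y:ℕ):ℤ) - z) % ((m + 1 : ℕ) : ℤ)).toNat, hmodlt _⟩, ?_⟩
    apply Fin.ext
    show ((z + ((((((y:ℕ):ℤ) - z) % ((m + 1 : ℕ) : ℤ)).toNat : ℕ) : ℤ)) % ((m + 1 : ℕ) : ℤ)).toNat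
        = (y : ℕ)
    have hr0 := Int.emod_nonneg (((y:ℕ):ℤ) - z) (ne_of_gt h2)
    rw [Int.toNat_of_nonneg hr0]
    have key : (z + ((((y:ℕ):ℤ) - z) % ((m + 1 : ℕ) : ℤ))) % ((m + 1 : ℕ) : ℤ)
        = ((y:ℕ):ℤ) % ((m + 1 : ℕ) : ℤ) := by
      conv_rhs => rw [show ((y:ℕ):ℤ) = z + (((y:ℕ):ℤ) - z) by ring]
      rw [Int.add_emod, Int.emod_emod_of_dvd _ dvd_rfl, ← Int.add_emod]
    rw [key, Int.emod_eq_of_lt (by positivity) (by exact_mod_cast y.isLt)]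
    exact Int.toNat_natCast _
  -- the matrices
  set F : Fin (m + 1 + 1) → Fin (m + 1) → ℝ := fun i => Bpt (m + 1) A p (z + (i : ℕ)) with hF
  set M : Matrix (Fin (m + 1)) (Fin (m + 1)) ℝ :=
    Matrix.of (fun i k => F k.succ i - F 0 i) with hM
  set g : Fin (m + 1) → Fin m → ℝ := fun j => A (σ j) with hg
  set N : Matrix (Fin m) (Fin m) ℝ := Matrix.of (fun i k => g k.succ i - g 0 i) with hN
  -- volume of L
  have hL : volume (Lsimp (m + 1) A p z) =
      ENNReal.ofReal |M.det| * ENNReal.ofReal (1 / (m + 1).factorial) :=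
    volume_convexHull_range F
  -- volume of K
  have hrange : Set.range A = Set.range g := by
    rw [hg]
    exact (hσsurj.range_comp A).symm
  have hK : volume (convexHull ℝ (Set.range A)) =
      ENNReal.ofReal |N.det| * ENNReal.ofReal (1 / m.factorial) := by
    rw [hrange]
    exact volume_convexHull_range g
  -- determinant identity
  have hcol : ∀ i : Fin (m + 1), (i:ℕ) < m → M i (Fin.last m) = 0 := by
    intro i hi
    show F (Fin.last m).succ i - F 0 i = 0
    simp only [hF]
    rw [hBlt _ i hi, hBlt _ i hi]
    have hval : ((z + (((Fin.last m).succ : Fin (m+2)) : ℕ)) % ((m+1:ℕ):ℤ)).toNat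
        = ((z + (((0 : Fin (m+2))) : ℕ)) % ((m+1:ℕ):ℤ)).toNat := by
      have h5 : (((Fin.last m).succ : Fin (m+2)) : ℕ) = m + 1 := by
        simp [Fin.val_succ]
      rw [h5]
      simp only [Fin.val_zero, Nat.cast_zero, add_zero]
      rw [show ((m+1:ℕ):ℤ) = ((m:ℤ)+1) by push_cast; ring]
      rw [show z + (((m:ℕ):ℤ)+1) = z + ((m:ℤ)+1) by push_cast; ring]
      have : (z + ((m:ℤ) + 1)) % ((m:ℤ) + 1) = z % ((m:ℤ)+1) := by
        have := Int.add_mul_emod_self_left (a := z) (b := (m:ℤ)+1) (c := 1)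
        simpa using this
      rw [this]
    simp only [hval, sub_self]
  have hMll : M (Fin.last m) (Fin.last m) = ((m:ℝ) + 1) * p := by
    show F (Fin.last m).succ (Fin.last m) - F 0 (Fin.last m) = ((m:ℝ) + 1) * p
    simp only [hF]
    rw [hBlast, hBlast]
    have h5 : (((Fin.last m).succ : Fin (m+2)) : ℕ) = m + 1 := by
      simp [Fin.val_succ]
    rw [h5]
    simp only [Fin.val_zero, Nat.cast_zero, add_zero]
    push_cast
    ring
  have hsub : M.submatrix (Fin.last m).succAbove (Fin.last m).succAbove = N := by
    ext i k
    rw [Matrix.submatrix_apply, Fin.succAbove_last]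
    show F (k.castSucc.succ) i.castSucc - F 0 i.castSucc = g k.succ i - g 0 i
    have hik : ((i.castSucc : Fin (m+1)) : ℕ) < m := by simp
    simp only [hF, hg]
    rw [hBlt _ _ hik, hBlt _ _ hik]
    have e1 : σ (k.succ) =
        ⟨((z + (((k.castSucc.succ : Fin (m+2))) : ℕ)) % ((m+1:ℕ):ℤ)).toNat, hmodlt _⟩ := by
      apply Fin.ext
      simp [hσ, Fin.val_succ]
    have e2 : σ 0 = ⟨((z + (((0 : Fin (m+2))) : ℕ)) % ((m+1:ℕ):ℤ)).toNat, hmodlt _⟩ := by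
      apply Fin.ext
      simp [hσ]
    rw [e1, e2]
    have e3 : (⟨((i.castSucc : Fin (m+1)) : ℕ), hik⟩ : Fin m) = i := by
      apply Fin.ext
      simp
    rw [e3]
  have hdet : M.det = (((m : ℝ) + 1) * p) * N.det := by
    rw [Matrix.det_succ_column M (Fin.last m), Finset.sum_eq_single (Fin.last m)]
    · rw [hsub, hMll, Fin.val_last]
      have hpow : (-1 : ℝ) ^ (m + m) = 1 := Even.neg_one_pow ⟨m, rfl⟩
      rw [hpow]
      ring
    · intro i _ hne
      have hi : (i:ℕ) < m := by
        have h1 := i.isLt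
        have h2 : (i:ℕ) ≠ m := fun h => hne (Fin.ext (by simp [h]))
        omega
      rw [hcol i hi, mul_zero, zero_mul]
    · simp
  rw [hL, hK, hdet]
  rw [← ENNReal.ofReal_mul (abs_nonneg _), ← ENNReal.ofReal_mul (abs_nonneg _),
    ← ENNReal.ofReal_mul (by positivity)]
  congr 1
  rw [abs_mul, abs_mul, abs_of_nonneg (by positivity : (0:ℝ) ≤ (m : ℝ) + 1)]
  have hfs : ((m + 1).factorial : ℝ) = ((m : ℝ) + 1) * m.factorial := by
    rw [Nat.factorial_succ]; push_cast; ring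
  rw [hfs]
  have h1 : (m.factorial : ℝ) ≠ 0 := by positivity
  field_simp
end

section
/- For every z ∈ ℤ, the absolute value of the determinant of the d×d matrix whose i-th row (i = 1,...,d) is B_{z+i} − B_z ∈ ℝ^d equals d·|p| times the absolute value of the determinant of the (d−1)×(d−1) matrix whose i-th row (i = 1,...,d−1) is A_i − A_0 ∈ ℝ^{d−1}. -/
lemma key_mod (m : ℕ) (hm : 0 < m) (z : ℤ) (a : ℕ) :
    ((z % (m : ℤ)).toNat + a) % m = ((z + (a : ℤ)) % (m : ℤ)).toNat := by
  have hm' : (0 : ℤ) < (m : ℤ) := by exact_mod_cast hm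
  have h1 : (0 : ℤ) ≤ z % m := Int.emod_nonneg z (by omega)
  have h2 : (0 : ℤ) ≤ (z + a) % m := Int.emod_nonneg _ (by omega)
  have key : ((((z % (m : ℤ)).toNat + a) % m : ℕ) : ℤ) = (z + (a : ℤ)) % (m : ℤ) := by
    push_cast [Int.toNat_of_nonneg h1]
    exact Int.emod_add_emod z m a
  omega

lemma border_det (n : ℕ) (B : Fin (n + 1) → Fin n → ℝ) :
    (Matrix.of fun i j : Fin (n + 1) =>
        (Fin.cases (1 : ℝ) (fun j' => B i j') j : ℝ)).det
      = (Matrix.of fun i j : Fin n => B i.succ j - B 0 j).det := by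
  have hAB : (Matrix.of fun i j : Fin (n + 1) =>
        (Fin.cases (1 : ℝ) (fun j' => B i j') j : ℝ)).det
      = (Matrix.of fun i j : Fin (n + 1) =>
          (Fin.cases (fun j => (Fin.cases (1 : ℝ) (fun j' => B 0 j') j : ℝ))
            (fun i' => fun j => (Fin.cases (0 : ℝ)
              (fun j' => B i'.succ j' - B 0 j') j : ℝ)) i j : ℝ)).det := by
    apply Matrix.det_eq_of_forall_row_eq_smul_add_const
      (fun i : Fin (n + 1) => if i = 0 then 0 else 1) 0 (by simp)
    intro i j
    induction i using Fin.cases with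
    | zero => simp
    | succ i' =>
      induction j using Fin.cases with
      | zero => simp [Fin.succ_ne_zero]
      | succ j' => simp [Fin.succ_ne_zero]
  rw [hAB, Matrix.det_succ_column_zero]
  rw [Fintype.sum_eq_single 0]
  · simp only [Fin.val_zero, pow_zero, one_mul, Matrix.of_apply, Fin.cases_zero]
    congr 1
  · intro i hi
    obtain ⟨i', rfl⟩ := Fin.eq_succ_of_ne_zero hi
    simp

lemma abs_det_diff_perm (n : ℕ) (A : Fin (n + 1) → Fin n → ℝ)
    (σ : Equiv.Perm (Fin (n + 1))) :
    |(Matrix.of fun i j : Fin n => A (σ i.succ) j - A (σ 0) j).det|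
      = |(Matrix.of fun i j : Fin n => A i.succ j - A 0 j).det| := by
  rw [← border_det n (fun k => A (σ k)), ← border_det n A]
  have : (Matrix.of fun i j : Fin (n + 1) =>
        (Fin.cases (1 : ℝ) (fun j' => A (σ i) j') j : ℝ))
      = (Matrix.of fun i j : Fin (n + 1) =>
          (Fin.cases (1 : ℝ) (fun j' => A i j') j : ℝ)).submatrix σ id := by
    ext i j
    simp [Matrix.submatrix_apply]
  rw [this, Matrix.det_permute]
  rcases Int.units_eq_one_or σ.sign with h | h <;> simp [h, abs_mul]

set_option maxHeartbeats 1000000 in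
/-- The absolute determinant of the `d×d` matrix with rows `B_{z+i} − B_z`
(`i = 1,…,d`) equals `d·|p|` times the absolute determinant of the
`(d−1)×(d−1)` matrix with rows `A_i − A_0` (`i = 1,…,d−1`). -/
theorem stmt14 (d : ℕ) (hd : 2 ≤ d) (A : Fin d → Fin (d - 1) → ℝ) (p : ℝ) (z : ℤ) :
    |(Matrix.of fun i : Fin d =>
        Bpt d A p (z + (i : ℕ) + 1) - Bpt d A p z).det| =
      (d : ℝ) * |p| * |(Matrix.of fun i : Fin (d - 1) =>
        A ⟨(i : ℕ) + 1, by have := i.isLt; omega⟩ - A ⟨0, by omega⟩).det| := by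
  obtain ⟨n, rfl⟩ : ∃ n, d = n + 1 := ⟨d - 1, by omega⟩
  have hm : (0 : ℤ) < ((n + 1 : ℕ) : ℤ) := by positivity
  have fpf : ∀ w : ℤ, ((w % ((n + 1 : ℕ) : ℤ)).toNat < n + 1) := fun w => by
    have := Int.emod_lt_of_pos w hm
    have := Int.emod_nonneg w (ne_of_gt hm)
    omega
  set f : ℤ → Fin (n + 1) := fun w => ⟨(w % ((n + 1 : ℕ) : ℤ)).toNat, fpf w⟩ with hf
  have hf_eq : ∀ v w : ℤ, v % ((n + 1 : ℕ) : ℤ) = w % ((n + 1 : ℕ) : ℤ) → f v = f w := by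
    intro v w h
    apply Fin.ext
    show (v % ((n + 1 : ℕ) : ℤ)).toNat = (w % ((n + 1 : ℕ) : ℤ)).toNat
    rw [h]
  set σ : Equiv.Perm (Fin (n + 1)) := Equiv.addLeft (f z) with hσ
  have hσf : ∀ k : Fin (n + 1), σ k = f (z + (k : ℕ)) := by
    intro k
    apply Fin.ext
    show ((z % ((n + 1 : ℕ) : ℤ)).toNat + (k : ℕ)) % (n + 1) = _
    exact key_mod (n + 1) (by omega) z (k : ℕ)
  set C : Matrix (Fin n) (Fin n) ℝ :=
    Matrix.of fun i j : Fin n => A (σ i.succ) j - A (σ 0) j with hC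
  set col : Matrix (Fin n) (Fin 1) ℝ :=
    Matrix.of fun (i : Fin n) (_ : Fin 1) =>
      ((z + (i : ℕ) + 1 : ℤ) : ℝ) * p - ((z : ℤ) : ℝ) * p with hcol
  set D : Matrix (Fin 1) (Fin 1) ℝ :=
    Matrix.of fun (_ _ : Fin 1) =>
      ((z + (n : ℕ) + 1 : ℤ) : ℝ) * p - ((z : ℤ) : ℝ) * p with hD
  have hblock : (Matrix.of fun i : Fin (n + 1) =>
        Bpt (n + 1) A p (z + (i : ℕ) + 1) - Bpt (n + 1) A p z).submatrix
          finSumFinEquiv finSumFinEquiv = Matrix.fromBlocks C col 0 D := by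
    ext i j
    rcases i with i | i <;> rcases j with j | j
    · -- top-left
      simp only [Matrix.submatrix_apply, finSumFinEquiv_apply_left,
        finSumFinEquiv_apply_right, Matrix.fromBlocks_apply₁₁, Matrix.of_apply,
        Pi.sub_apply, Bpt, Fin.coe_castAdd]
      rw [dif_pos (show ((j : ℕ) < n + 1 - 1) from j.isLt),
        dif_pos (show ((j : ℕ) < n + 1 - 1) from j.isLt)]
      have e1 : σ i.succ = f (z + (i : ℕ) + 1) := by
        rw [hσf]
        apply hf_eq
        congr 1
        push_cast [Fin.val_succ]
        ring
      have e2 : σ 0 = f z := by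
        rw [hσf]
        congr 1
        simp
      rw [hC]
      simp only [Matrix.of_apply]
      rw [e1, e2]
      rfl
    · -- top-right
      simp only [Matrix.submatrix_apply, finSumFinEquiv_apply_left,
        finSumFinEquiv_apply_right, Matrix.fromBlocks_apply₁₂, Matrix.of_apply,
        Pi.sub_apply, Bpt, Fin.coe_castAdd, Fin.coe_natAdd]
      rw [dif_neg (show ¬(n + (j : ℕ) < n + 1 - 1) by omega),
        dif_neg (show ¬(n + (j : ℕ) < n + 1 - 1) by omega)]
      rw [hcol]
      have : (j : ℕ) = 0 := by omega
      simp [this]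
    · -- bottom-left: zero
      simp only [Matrix.submatrix_apply, finSumFinEquiv_apply_left,
        finSumFinEquiv_apply_right, Matrix.fromBlocks_apply₂₁, Matrix.of_apply,
        Pi.sub_apply, Bpt, Fin.coe_castAdd, Fin.coe_natAdd]
      rw [dif_pos (show ((j : ℕ) < n + 1 - 1) from j.isLt),
        dif_pos (show ((j : ℕ) < n + 1 - 1) from j.isLt)]
      simp only [Matrix.zero_apply]
      rw [sub_eq_zero]
      have hi0 : (i : ℕ) = 0 := by omega
      have hkey : f (z + ((n + (i : ℕ) : ℕ) : ℤ) + 1) = f z := by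
        apply hf_eq
        have h' : z + ((n + (i : ℕ) : ℕ) : ℤ) + 1 = z + ((n + 1 : ℕ) : ℤ) * 1 := by
          push_cast [hi0]; ring
        rw [h', Int.add_mul_emod_self_left]
      congr 1
    · -- bottom-right
      simp only [Matrix.submatrix_apply, finSumFinEquiv_apply_right,
        Matrix.fromBlocks_apply₂₂, Matrix.of_apply, Pi.sub_apply, Bpt,
        Fin.coe_natAdd]
      rw [dif_neg (show ¬(n + (j : ℕ) < n + 1 - 1) by omega),
        dif_neg (show ¬(n + (j : ℕ) < n + 1 - 1) by omega)]
      rw [hD]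
      have hi0 : (i : ℕ) = 0 := by omega
      simp only [Matrix.of_apply]
      push_cast [hi0]
      ring
  have hdet : (Matrix.of fun i : Fin (n + 1) =>
        Bpt (n + 1) A p (z + (i : ℕ) + 1) - Bpt (n + 1) A p z).det
      = C.det * (((n : ℝ) + 1) * p) := by
    rw [← Matrix.det_submatrix_equiv_self finSumFinEquiv, hblock,
      Matrix.det_fromBlocks_zero₂₁, Matrix.det_fin_one]
    rw [hD]
    simp only [Matrix.of_apply]
    push_cast
    ring
  rw [hdet, abs_mul]
  have hCR : |C.det| = |(Matrix.of fun i : Fin n =>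
      A ⟨(i : ℕ) + 1, by have := i.isLt; omega⟩ - A ⟨0, by omega⟩).det| := by
    rw [hC, abs_det_diff_perm n A σ]
    rfl
  rw [hCR, abs_mul]
  have : |(n : ℝ) + 1| = (n : ℝ) + 1 := abs_of_pos (by positivity)
  rw [this]
  push_cast
  exact mul_comm _ _
end

section
/- Assume the points A_0, ..., A_{d−1} are affinely independent and p > 0. Then the union over all z ∈ ℤ of the simplices L_z equals the infinite prism K × ℝ ⊂ ℝ^d. -/
namespace Stmt15Aux

def res (d : ℕ) (hd : 0 < d) (j : ℤ) : Fin d :=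
  ⟨(j % (d : ℤ)).toNat, by
    have h2 : (0 : ℤ) < (d : ℤ) := by exact_mod_cast hd
    have h3 := Int.emod_lt_of_pos j h2
    have h4 := Int.emod_nonneg j (ne_of_gt h2)
    omega⟩

variable {d : ℕ}

lemma res_period (hd : 0 < d) (j : ℤ) : res d hd (j + d) = res d hd j := by
  unfold res
  congr 1
  rw [show j + (d : ℤ) = j + (d : ℤ) * 1 by ring, Int.add_mul_emod_self_left]

lemma res_bij (hd : 0 < d) (z : ℤ) :
    Function.Bijective (fun k : Fin d => res d hd (z + (k : ℕ))) := by
  rw [Fintype.bijective_iff_injective_and_card]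
  refine ⟨fun k1 k2 h => ?_, rfl⟩
  have h2 : (0 : ℤ) < (d : ℤ) := by exact_mod_cast hd
  have hval : ((res d hd (z + (k1 : ℕ))) : ℕ) = ((res d hd (z + (k2 : ℕ))) : ℕ) :=
    congrArg Fin.val h
  have h3 := Int.emod_nonneg (z + (k1 : ℕ)) (ne_of_gt h2)
  have h4 := Int.emod_nonneg (z + (k2 : ℕ)) (ne_of_gt h2)
  have h' : (z + (k1 : ℕ)) % d = (z + (k2 : ℕ)) % d := by
    unfold res at hval
    simp only at hval
    omega
  have hdvd : (d : ℤ) ∣ ((k1 : ℕ) : ℤ) - ((k2 : ℕ) : ℤ) := by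
    have := Int.ModEq.dvd (a := z + (k1 : ℕ)) (b := z + (k2 : ℕ)) h'
    have he : z + ((k2 : ℕ) : ℤ) - (z + ((k1 : ℕ) : ℤ)) = (k2 : ℕ) - ((k1 : ℕ) : ℤ) := by ring
    rw [he] at this
    have := dvd_neg.mpr this
    rwa [neg_sub] at this
  have hk1 := k1.isLt
  have hk2 := k2.isLt
  have habs : |((k1 : ℕ) : ℤ) - ((k2 : ℕ) : ℤ)| < d := by
    rw [abs_lt]; omega
  have := Int.eq_zero_of_abs_lt_dvd hdvd habs
  ext
  omega

lemma sum_res (hd : 0 < d) (z : ℤ) (g : Fin d → ℝ) :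
    ∑ k ∈ Finset.range d, g (res d hd (z + (k : ℕ))) = ∑ j, g j := by
  rw [← Fin.sum_univ_eq_sum_range (fun k : ℕ => g (res d hd (z + (k : ℕ)))) d]
  exact Fintype.sum_bijective _ (res_bij hd z) _ _ (fun k => rfl)

/-- Key decomposition of the weighted sum over the `d+1` vertices of `L_z`. -/
lemma key_sum (hd : 0 < d) (l : Fin d → ℝ) (s : ℝ) (z : ℤ) (c : ℤ → ℝ) :
    ∑ k : Fin (d + 1),
        (if (k : ℕ) = 0 then l (res d hd z) - s
         else if (k : ℕ) = d then s else l (res d hd (z + (k : ℕ)))) * c (z + (k : ℕ))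
      = ∑ k ∈ Finset.range d, l (res d hd (z + (k : ℕ))) * c (z + (k : ℕ))
          + s * (c (z + (d : ℕ)) - c z) := by
  rw [Fin.sum_univ_eq_sum_range
    (fun k : ℕ => (if k = 0 then l (res d hd z) - s
      else if k = d then s else l (res d hd (z + (k : ℕ)))) * c (z + (k : ℕ))) (d + 1)]
  rw [Finset.sum_range_succ]
  have hdne : d ≠ 0 := by omega
  have hlast : (if d = 0 then l (res d hd z) - s
      else if d = d then s else l (res d hd (z + (d : ℕ)))) * c (z + (d : ℕ))
      = s * c (z + (d : ℕ)) := by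
    rw [if_neg hdne, if_pos rfl]
  rw [hlast]
  have hmain : ∑ k ∈ Finset.range d,
      (if k = 0 then l (res d hd z) - s
        else if k = d then s else l (res d hd (z + (k : ℕ)))) * c (z + (k : ℕ))
      = ∑ k ∈ Finset.range d,
        (l (res d hd (z + (k : ℕ))) * c (z + (k : ℕ)) - if k = 0 then s * c z else 0) := by
    refine Finset.sum_congr rfl fun k hk => ?_
    have hklt : k < d := Finset.mem_range.mp hk
    by_cases h0 : k = 0
    · subst h0
      rw [if_pos rfl, if_pos rfl]
      norm_num
      ring
    · rw [if_neg h0, if_neg (by omega), if_neg h0]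
      ring
  rw [hmain, Finset.sum_sub_distrib, Finset.sum_ite_eq' (Finset.range d) 0 (fun _ => s * c z),
    if_pos (Finset.mem_range.mpr hd)]
  ring

/-- The height function. -/
noncomputable def F (hd : 0 < d) (l : Fin d → ℝ) (p : ℝ) (z : ℤ) : ℝ :=
  ∑ k ∈ Finset.range d, l (res d hd (z + (k : ℕ))) * (((z + (k : ℕ) : ℤ) : ℝ) * p)

lemma F_succ (hd : 0 < d) (l : Fin d → ℝ) (p : ℝ) (z : ℤ) :
    F hd l p (z + 1) = F hd l p z + l (res d hd z) * ((d : ℝ) * p) := by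
  have e1 := Finset.sum_range_succ'
    (fun k : ℕ => l (res d hd (z + (k : ℕ))) * (((z + (k : ℕ) : ℤ) : ℝ) * p)) d
  have e2 := Finset.sum_range_succ
    (fun k : ℕ => l (res d hd (z + (k : ℕ))) * (((z + (k : ℕ) : ℤ) : ℝ) * p)) d
  have hshift : ∑ k ∈ Finset.range d,
      l (res d hd (z + ((k + 1 : ℕ) : ℤ))) * (((z + ((k + 1 : ℕ)) : ℤ) : ℝ) * p)
      = F hd l p (z + 1) := by
    unfold F
    refine Finset.sum_congr rfl fun k _ => ?_
    have : z + (((k + 1 : ℕ)) : ℤ) = z + 1 + (k : ℕ) := by push_cast; ring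
    rw [this]
  rw [hshift] at e1
  have hper : res d hd (z + (d : ℕ)) = res d hd z := res_period hd z
  rw [hper] at e2
  have h0 : res d hd (z + ((0 : ℕ) : ℤ)) = res d hd z := by norm_num
  rw [h0] at e1
  rw [e2] at e1
  have : ((z + ((0:ℕ):ℤ) : ℤ) : ℝ) = (z : ℝ) := by push_cast; ring
  rw [this] at e1
  have hd' : ((z + ((d:ℕ):ℤ) : ℤ) : ℝ) = (z : ℝ) + d := by push_cast; ring
  rw [hd'] at e1
  show F hd l p (z+1) = F hd l p z + l (res d hd z) * ((d : ℝ) * p)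
  unfold F at e1 ⊢
  linarith [e1]

lemma F_mono (hd : 0 < d) (l : Fin d → ℝ) (p : ℝ) (hp : 0 < p) (hl0 : ∀ j, 0 ≤ l j) :
    Monotone (F hd l p) := by
  apply monotone_int_of_le_succ
  intro z
  rw [F_succ]
  have : 0 ≤ l (res d hd z) * ((d : ℝ) * p) := mul_nonneg (hl0 _) (by positivity)
  linarith

lemma F_period (hd : 0 < d) (l : Fin d → ℝ) (p : ℝ) (hl1 : ∑ j, l j = 1) (z : ℤ) :
    F hd l p (z + (d : ℤ)) = F hd l p z + (d : ℝ) * p := by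
  unfold F
  have step : ∀ k ∈ Finset.range d,
      l (res d hd (z + (d:ℤ) + (k : ℕ))) * (((z + (d:ℤ) + (k : ℕ) : ℤ) : ℝ) * p)
      = l (res d hd (z + (k : ℕ))) * (((z + (k : ℕ) : ℤ) : ℝ) * p)
        + l (res d hd (z + (k : ℕ))) * ((d : ℝ) * p) := by
    intro k _
    have h1 : z + (d:ℤ) + (k : ℕ) = (z + (k : ℕ)) + (d : ℤ) := by ring
    rw [h1, res_period hd]
    push_cast
    ring
  rw [Finset.sum_congr rfl step, Finset.sum_add_distrib]
  congr 1
  have : ∑ k ∈ Finset.range d, l (res d hd (z + (k : ℕ))) * ((d : ℝ) * p)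
      = (∑ k ∈ Finset.range d, l (res d hd (z + (k : ℕ)))) * ((d : ℝ) * p) := by
    rw [Finset.sum_mul]
  rw [this, sum_res hd z l, hl1, one_mul]

lemma F_nsmul (hd : 0 < d) (l : Fin d → ℝ) (p : ℝ) (hl1 : ∑ j, l j = 1) (n : ℕ) (z : ℤ) :
    F hd l p (z + (n : ℤ) * d) = F hd l p z + (n : ℝ) * ((d : ℝ) * p) := by
  induction n with
  | zero => simp
  | succ n ih =>
    have h1 : z + ((n + 1 : ℕ) : ℤ) * d = (z + (n : ℤ) * d) + (d : ℤ) := by push_cast; ring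
    rw [h1, F_period hd l p hl1, ih]
    push_cast
    ring

lemma Bpt_coord_lt (hd : 0 < d) (A : Fin d → Fin (d - 1) → ℝ) (p : ℝ) (j : ℤ)
    (i : Fin d) (h : (i : ℕ) < d - 1) :
    Bpt d A p j i = A (res d hd j) ⟨(i : ℕ), h⟩ := by
  simp only [Bpt, dif_pos h]
  rfl

lemma Bpt_coord_last (A : Fin d → Fin (d - 1) → ℝ) (p : ℝ) (j : ℤ)
    (i : Fin d) (h : ¬ (i : ℕ) < d - 1) :
    Bpt d A p j i = (j : ℝ) * p := by
  simp only [Bpt, dif_neg h]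

end Stmt15Aux

open Stmt15Aux

/-- If `A_0, …, A_{d−1}` are affinely independent and `p > 0`, the union of the
simplices `L_z` over `z ∈ ℤ` is the infinite prism `K × ℝ ⊂ ℝ^d`, i.e. the set of
points of `ℝ^d` whose first `d−1` coordinates form a point of
`K = conv{A_0,…,A_{d−1}}` (the last coordinate being arbitrary). -/
theorem stmt15 (d : ℕ) (hd : 2 ≤ d) (A : Fin d → Fin (d - 1) → ℝ) (p : ℝ)
    (hA : AffineIndependent ℝ A) (hp : 0 < p) :
    (⋃ z : ℤ, Lsimp d A p z) =
      {x : Fin d → ℝ |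
        (fun i : Fin (d - 1) => x ⟨(i : ℕ), by have := i.isLt; omega⟩) ∈
          convexHull ℝ (Set.range A)} := by
  classical
  have hd0 : 0 < d := by omega
  have hdp : (0 : ℝ) < (d : ℝ) * p := by
    have : (0 : ℝ) < (d : ℝ) := by exact_mod_cast hd0
    positivity
  ext x
  simp only [Set.mem_iUnion, Set.mem_setOf_eq]
  constructor
  · -- easy direction: each simplex lies in the prism
    rintro ⟨z, hx⟩
    set π : (Fin d → ℝ) →ₗ[ℝ] (Fin (d - 1) → ℝ) :=
      LinearMap.funLeft ℝ ℝ (fun i : Fin (d - 1) => (⟨(i : ℕ), by have := i.isLt; omega⟩ : Fin d))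
      with hπ
    have hsub : Lsimp d A p z ⊆ π ⁻¹' (convexHull ℝ (Set.range A)) := by
      apply convexHull_min ?_ ((convex_convexHull ℝ _).linear_preimage π)
      rintro y ⟨i, rfl⟩
      have hB : π (Bpt d A p (z + (i : ℕ))) = A (res d hd0 (z + (i : ℕ))) := by
        funext j
        show Bpt d A p (z + (i : ℕ)) ⟨(j : ℕ), _⟩ = _
        rw [Bpt_coord_lt hd0 A p _ _ (by exact j.isLt)]
      show π (Bpt d A p (z + (i : ℕ))) ∈ convexHull ℝ (Set.range A)
      rw [hB]
      exact subset_convexHull ℝ _ ⟨_, rfl⟩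
    exact hsub hx
  · -- hard direction
    intro h
    rw [mem_convexHull_iff_exists_fintype] at h
    obtain ⟨ι, hι, w, zf, hw0, hw1, hzf, hsum⟩ := h
    -- extract barycentric weights indexed by `Fin d`
    have hg : ∀ i, ∃ j, A j = zf i := hzf
    choose g hgA using hg
    set l : Fin d → ℝ := fun j => ∑ i ∈ Finset.univ.filter (fun i => g i = j), w i with hl
    have hl0 : ∀ j, 0 ≤ l j := fun j => Finset.sum_nonneg fun i _ => hw0 i
    have hl1 : ∑ j, l j = 1 := by
      rw [hl]
      rw [Finset.sum_fiberwise Finset.univ g w]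
      exact hw1
    have hlA : ∑ j, l j • A j
        = (fun i : Fin (d - 1) => x ⟨(i : ℕ), by have := i.isLt; omega⟩) := by
      rw [← hsum, hl]
      rw [← Finset.sum_fiberwise Finset.univ g (fun i => w i • zf i)]
      refine Finset.sum_congr rfl fun j _ => ?_
      rw [Finset.sum_smul]
      refine Finset.sum_congr rfl fun i hi => ?_
      have : g i = j := (Finset.mem_filter.mp hi).2
      rw [← this, hgA]
    -- choose the slab index z
    set t : ℝ := x ⟨d - 1, by omega⟩ with ht
    have Fmono := F_mono hd0 l p hp hl0
    have Hinh : ∃ z : ℤ, F hd0 l p z ≤ t := by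
      obtain ⟨n, hn⟩ := exists_nat_ge ((F hd0 l p 0 - t) / ((d : ℝ) * p))
      have h1 := F_nsmul hd0 l p hl1 n (-(n : ℤ) * d)
      have h2 : -(n : ℤ) * d + (n : ℤ) * d = 0 := by ring
      rw [h2] at h1
      have h3 : F hd0 l p 0 - t ≤ (n : ℝ) * ((d : ℝ) * p) := by
        rw [div_le_iff₀ hdp] at hn
        linarith
      exact ⟨-(n : ℤ) * d, by linarith⟩
    have Hbdd : ∃ b : ℤ, ∀ z : ℤ, F hd0 l p z ≤ t → z ≤ b := by
      obtain ⟨m, hm⟩ := exists_nat_ge ((t - F hd0 l p 0) / ((d : ℝ) * p) + 1)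
      have h1 := F_nsmul hd0 l p hl1 m 0
      rw [zero_add] at h1
      have h3 : t - F hd0 l p 0 ≤ ((m : ℝ) - 1) * ((d : ℝ) * p) := by
        rw [← div_le_iff₀ hdp]
        linarith
      have hFm : t < F hd0 l p ((m : ℤ) * d) := by
        rw [h1]
        nlinarith
      refine ⟨(m : ℤ) * d, fun z hz => ?_⟩
      by_contra hlt
      push_neg at hlt
      have := Fmono (le_of_lt hlt)
      linarith
    obtain ⟨z, hzle, hzmax⟩ := Int.exists_greatest_of_bdd Hbdd Hinh
    have ht2 : t < F hd0 l p (z + 1) := by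
      by_contra hcon
      push_neg at hcon
      have := hzmax _ hcon
      omega
    set s : ℝ := (t - F hd0 l p z) / ((d : ℝ) * p) with hs
    have hs0 : 0 ≤ s := div_nonneg (by linarith) hdp.le
    have hsdp : s * ((d : ℝ) * p) = t - F hd0 l p z := div_mul_cancel₀ _ (ne_of_gt hdp)
    have hs1 : s ≤ l (res d hd0 z) := by
      have hF1 := F_succ hd0 l p z
      rw [hs, div_le_iff₀ hdp]
      rw [hF1] at ht2
      linarith
    -- the convex weights on the d+1 vertices of L_z
    refine ⟨z, mem_convexHull_of_exists_fintype
      (fun k : Fin (d + 1) =>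
        if (k : ℕ) = 0 then l (res d hd0 z) - s
        else if (k : ℕ) = d then s else l (res d hd0 (z + (k : ℕ))))
      (fun k : Fin (d + 1) => Bpt d A p (z + (k : ℕ))) ?_ ?_ (fun k => ⟨k, rfl⟩) ?_⟩
    · intro k
      split_ifs with h1 h2
      · linarith
      · exact hs0
      · exact hl0 _
    · show ∑ k : Fin (d + 1),
        (if (k : ℕ) = 0 then l (res d hd0 z) - s
         else if (k : ℕ) = d then s else l (res d hd0 (z + (k : ℕ)))) = 1
      have h2 := key_sum hd0 l s z (fun _ => 1)
      simp only [mul_one] at h2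
      rw [h2, sum_res hd0 z l, hl1]
      ring
    · funext i
      rw [Finset.sum_apply]
      simp only [Pi.smul_apply, smul_eq_mul]
      by_cases hi : (i : ℕ) < d - 1
      · have hc : ∀ k : Fin (d + 1),
            (if (k : ℕ) = 0 then l (res d hd0 z) - s
              else if (k : ℕ) = d then s else l (res d hd0 (z + (k : ℕ))))
              * Bpt d A p (z + (k : ℕ)) i
            = (if (k : ℕ) = 0 then l (res d hd0 z) - s
              else if (k : ℕ) = d then s else l (res d hd0 (z + (k : ℕ))))
              * A (res d hd0 (z + (k : ℕ))) ⟨(i : ℕ), hi⟩ := fun k => by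
          rw [Bpt_coord_lt hd0 A p _ _ hi]
        rw [Finset.sum_congr rfl fun k _ => hc k]
        rw [key_sum hd0 l s z (fun j => A (res d hd0 j) ⟨(i : ℕ), hi⟩)]
        rw [res_period hd0 z, sub_self, mul_zero, add_zero]
        rw [sum_res hd0 z (fun j => l j * A j ⟨(i : ℕ), hi⟩)]
        have happ := congrFun hlA ⟨(i : ℕ), hi⟩
        rw [Finset.sum_apply] at happ
        simp only [Pi.smul_apply, smul_eq_mul] at happ
        rw [happ]
      · have hc : ∀ k : Fin (d + 1),
            (if (k : ℕ) = 0 then l (res d hd0 z) - s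
              else if (k : ℕ) = d then s else l (res d hd0 (z + (k : ℕ))))
              * Bpt d A p (z + (k : ℕ)) i
            = (if (k : ℕ) = 0 then l (res d hd0 z) - s
              else if (k : ℕ) = d then s else l (res d hd0 (z + (k : ℕ))))
              * (((z + (k : ℕ) : ℤ) : ℝ) * p) := fun k => by
          rw [Bpt_coord_last A p _ _ hi]
        rw [Finset.sum_congr rfl fun k _ => hc k]
        rw [key_sum hd0 l s z (fun j => (j : ℝ) * p)]
        have hFdef : ∑ k ∈ Finset.range d,
            l (res d hd0 (z + (k : ℕ))) * (((z + (k : ℕ) : ℤ) : ℝ) * p) = F hd0 l p z := rfl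
        rw [hFdef]
        have hdiff : ((z + ((d:ℕ) : ℤ) : ℤ) : ℝ) * p - (z : ℝ) * p = (d : ℝ) * p := by
          push_cast
          ring
        rw [hdiff, hsdp]
        have hxi : x i = t := by
          rw [ht]
          congr 1
          ext
          simp only []
          omega
        rw [hxi]
        ring
end

section
/- Assume the points A_0, ..., A_{d−1} are affinely independent and p > 0. Then for any z, z' ∈ ℤ with z ≠ z', the interiors (in ℝ^d) of the simplices L_z and L_{z'} are disjoint; moreover, for every z ∈ ℤ the two consecutive simplices meet in a common facet: L_z ∩ L_{z+1} = conv{B_{z+1}, ..., B_{z+d}}. -/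
namespace Stmt16Aux

/-- index j mod d in Fin d -/
def jm (d : ℕ) (hd : 2 ≤ d) (j : ℤ) : Fin d :=
  ⟨(j % (d : ℤ)).toNat, by
    have h2 : (0 : ℤ) < (d : ℤ) := by omega
    have h3 := Int.emod_lt_of_pos j h2
    have h4 := Int.emod_nonneg j (ne_of_gt h2)
    omega⟩

def li (d : ℕ) (hd : 2 ≤ d) : Fin d := ⟨d - 1, by omega⟩

noncomputable def proj1 (d : ℕ) (hd : 2 ≤ d) : (Fin d → ℝ) →ₗ[ℝ] (Fin (d - 1) → ℝ) :=
  LinearMap.funLeft ℝ ℝ (Fin.castLE (Nat.sub_le d 1))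

lemma Bpt_li (d : ℕ) (hd : 2 ≤ d) (A : Fin d → Fin (d - 1) → ℝ) (p : ℝ) (j : ℤ) :
    Bpt d A p j (li d hd) = (j : ℝ) * p := by
  show dite _ _ _ = _
  rw [dif_neg]
  simp [li]

lemma proj1_Bpt (d : ℕ) (hd : 2 ≤ d) (A : Fin d → Fin (d - 1) → ℝ) (p : ℝ) (j : ℤ) :
    proj1 d hd (Bpt d A p j) = A (jm d hd j) := by
  funext i
  have h : ((Fin.castLE (Nat.sub_le d 1) i : Fin d) : ℕ) < d - 1 := i.isLt
  simp only [proj1, LinearMap.funLeft_apply, Bpt, dif_pos h]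
  rfl

lemma proj1_single (d : ℕ) (hd : 2 ≤ d) :
    proj1 d hd ((Pi.single (li d hd) 1 : Fin d → ℝ)) = 0 := by
  funext i
  have h : (Fin.castLE (Nat.sub_le d 1) i : Fin d) ≠ li d hd := by
    intro hc
    have h2 := congrArg Fin.val hc
    have := i.isLt
    simp only [li, Fin.coe_castLE] at h2
    omega
  simp [proj1, LinearMap.funLeft_apply, Pi.single_eq_of_ne h]

noncomputable def bA (d : ℕ) (hd : 2 ≤ d) (A : Fin d → Fin (d - 1) → ℝ)
    (hA : AffineIndependent ℝ A) : AffineBasis (Fin d) ℝ (Fin (d - 1) → ℝ) :=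
  ⟨A, hA, by
    rw [hA.affineSpan_eq_top_iff_card_eq_finrank_add_one]
    simp [Module.finrank_pi]
    omega⟩

end Stmt16Aux

namespace Stmt16Aux

/-- integer weight -/
def wI (d : ℕ) (r k : ℤ) : ℤ := (k - r - 1) % (d : ℤ) + 1

/-- predicted value of F r on B j -/
def FB (d : ℕ) (r j : ℤ) : ℤ := j - 1 - (j - r - 1) % (d : ℤ)

noncomputable def Fmap (d : ℕ) (hd : 2 ≤ d) (A : Fin d → Fin (d - 1) → ℝ)
    (hA : AffineIndependent ℝ A) (p : ℝ) (r : ℤ) : (Fin d → ℝ) →ᵃ[ℝ] ℝ :=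
  p⁻¹ • (LinearMap.proj (li d hd) : (Fin d → ℝ) →ₗ[ℝ] ℝ).toAffineMap
    - ∑ k : Fin d, ((wI d r (k : ℕ) : ℝ)) •
        ((bA d hd A hA).coord k).comp (proj1 d hd).toAffineMap

lemma Fmap_apply (d : ℕ) (hd : 2 ≤ d) (A : Fin d → Fin (d - 1) → ℝ)
    (hA : AffineIndependent ℝ A) (p : ℝ) (r : ℤ) (x : Fin d → ℝ) :
    Fmap d hd A hA p r x =
      p⁻¹ * x (li d hd) - ∑ k : Fin d, (wI d r (k : ℕ) : ℝ) *
        (bA d hd A hA).coord k (proj1 d hd x) := by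
  have hsum : (∑ k : Fin d, ((wI d r (k : ℕ) : ℝ)) •
      ((bA d hd A hA).coord k).comp (proj1 d hd).toAffineMap) x
      = ∑ k : Fin d, (wI d r (k : ℕ) : ℝ) * (bA d hd A hA).coord k (proj1 d hd x) := by
    have := map_sum (AddMonoidHom.mk' (fun f : (Fin d → ℝ) →ᵃ[ℝ] ℝ => f x) (fun f g => rfl))
      (fun k : Fin d => ((wI d r (k : ℕ) : ℝ)) •
        ((bA d hd A hA).coord k).comp (proj1 d hd).toAffineMap) Finset.univ
    refine this.trans ?_
    apply Finset.sum_congr rfl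
    intro k _
    show (((wI d r (k:ℕ) : ℝ)) • ((bA d hd A hA).coord k).comp (proj1 d hd).toAffineMap) x = _
    simp [AffineMap.coe_smul, AffineMap.comp_apply]
  simp only [Fmap, AffineMap.coe_sub, Pi.sub_apply, AffineMap.coe_smul, Pi.smul_apply,
    LinearMap.coe_toAffineMap, hsum, smul_eq_mul, AffineMap.comp_apply]
  rfl

end Stmt16Aux

namespace Stmt16Aux

lemma coord_bA (d : ℕ) (hd : 2 ≤ d) (A : Fin d → Fin (d - 1) → ℝ)
    (hA : AffineIndependent ℝ A) (k m : Fin d) :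
    (bA d hd A hA).coord k (A m) = if k = m then 1 else 0 := by
  have : A m = (bA d hd A hA) m := rfl
  rw [this, AffineBasis.coord_apply]

lemma Fmap_Bpt (d : ℕ) (hd : 2 ≤ d) (A : Fin d → Fin (d - 1) → ℝ)
    (hA : AffineIndependent ℝ A) (p : ℝ) (hp : p ≠ 0) (r j : ℤ) :
    Fmap d hd A hA p r (Bpt d A p j) = ((FB d r j : ℤ) : ℝ) := by
  rw [Fmap_apply, Bpt_li d hd, proj1_Bpt d hd]
  have h1 : p⁻¹ * ((j:ℝ) * p) = (j : ℝ) := by field_simp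
  have h2 : ∀ k : Fin d, (bA d hd A hA).coord k (A (jm d hd j)) =
      if k = jm d hd j then 1 else 0 := fun k => coord_bA d hd A hA k _
  simp only [h1, h2, mul_ite, mul_one, mul_zero, Finset.sum_ite_eq', Finset.mem_univ, if_true]
  have hjm : ((jm d hd j : ℕ) : ℤ) = j % (d : ℤ) := by
    have h2' : (0 : ℤ) < (d : ℤ) := by omega
    simp [jm]
    exact Int.emod_nonneg j (ne_of_gt h2')
  have hmod : (j % (d:ℤ) - r - 1) % (d:ℤ) = (j - r - 1) % (d:ℤ) := by
    rw [show j % (d:ℤ) - r - 1 = j % (d:ℤ) - (r+1) by ring,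
      show j - r - 1 = j - (r+1) by ring, Int.sub_emod, Int.sub_emod j,
      Int.emod_emod_of_dvd _ dvd_rfl]
  have key : wI d r ((jm d hd j : ℕ) : ℤ) = (j - r - 1) % (d:ℤ) + 1 := by
    unfold wI
    rw [show ((jm d hd j : ℕ) : ℤ) - r - 1 = j % (d:ℤ) - r - 1 by rw [hjm], hmod]
  rw [key]
  unfold FB
  push_cast
  ring

end Stmt16Aux

namespace Stmt16Aux

lemma le_emod_self {a : ℤ} {d : ℕ} (hd : 2 ≤ d) (h : a < (d:ℤ)) : a ≤ a % (d:ℤ) := by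
  rcases le_or_gt 0 a with h0 | h0
  · rw [Int.emod_eq_of_lt h0 h]
  · exact le_of_lt (lt_of_lt_of_le h0 (Int.emod_nonneg a (by omega)))

lemma emod_le_self {a : ℤ} {d : ℕ} (hd : 2 ≤ d) (h : 0 ≤ a) : a % (d:ℤ) ≤ a := by
  rcases lt_or_ge a (d:ℤ) with h1 | h1
  · rw [Int.emod_eq_of_lt h h1]
  · exact le_trans (le_of_lt (Int.emod_lt_of_pos a (by omega))) h1

lemma FB_le_of_lt {d : ℕ} (hd : 2 ≤ d) {z z' i : ℤ} (hzz : z < z') (hi0 : 0 ≤ i)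
    (hid : i ≤ (d:ℤ)) : FB d (z' - 1) (z + i) ≤ z' - 1 := by
  unfold FB
  have h1 : z + i - (z' - 1) - 1 = z + i - z' := by ring
  rw [h1]
  have h2 : z + i - z' ≤ (z + i - z') % (d:ℤ) := le_emod_self hd (by omega)
  omega

lemma FB_ge {d : ℕ} (hd : 2 ≤ d) {z' i : ℤ} (hi0 : 0 ≤ i) :
    z' - 1 ≤ FB d (z' - 1) (z' + i) := by
  unfold FB
  have h1 : z' + i - (z' - 1) - 1 = i := by ring
  rw [h1]
  have h2 : i % (d:ℤ) ≤ i := emod_le_self hd hi0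
  omega

lemma FB_self {d : ℕ} (hd : 2 ≤ d) (z : ℤ) : FB d z z = z - d := by
  unfold FB
  have h1 : z - z - 1 = -1 := by ring
  have h2 : (-1 : ℤ) % (d:ℤ) = ((d:ℤ) - 1) % (d:ℤ) := by
    rw [show ((d:ℤ) - 1) = -1 + (d:ℤ) * 1 by ring, Int.add_mul_emod_self_left]
  rw [h1, h2, Int.emod_eq_of_lt (by omega) (by omega)]
  ring

lemma FB_succ {d : ℕ} (hd : 2 ≤ d) {z i : ℤ} (hi1 : 1 ≤ i) (hid : i ≤ (d:ℤ)) :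
    FB d z (z + i) = z := by
  unfold FB
  have h1 : z + i - z - 1 = i - 1 := by ring
  rw [h1, Int.emod_eq_of_lt (by omega) (by omega)]
  ring

lemma Fmap_shift (d : ℕ) (hd : 2 ≤ d) (A : Fin d → Fin (d - 1) → ℝ)
    (hA : AffineIndependent ℝ A) (p : ℝ) (r : ℤ) (x : Fin d → ℝ) (t : ℝ) :
    Fmap d hd A hA p r (x + t • (Pi.single (li d hd) 1 : Fin d → ℝ)) =
      Fmap d hd A hA p r x + t * p⁻¹ := by
  have hproj : proj1 d hd (x + t • (Pi.single (li d hd) 1 : Fin d → ℝ)) = proj1 d hd x := by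
    rw [map_add, map_smul, proj1_single d hd]
    simp
  rw [Fmap_apply, Fmap_apply, hproj]
  have hlast : (x + t • (Pi.single (li d hd) 1 : Fin d → ℝ)) (li d hd) = x (li d hd) + t := by
    simp
  rw [hlast]
  ring

end Stmt16Aux

namespace Stmt16Aux

lemma hull_le {d n : ℕ} (hd : 2 ≤ d) {A : Fin d → Fin (d - 1) → ℝ}
    (hA : AffineIndependent ℝ A) (p : ℝ) (r : ℤ) {g : Fin n → (Fin d → ℝ)} {c : ℝ}
    (h : ∀ i, Fmap d hd A hA p r (g i) ≤ c) :
    convexHull ℝ (Set.range g) ⊆ (Fmap d hd A hA p r) ⁻¹' Set.Iic c :=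
  convexHull_min (by rintro _ ⟨i, rfl⟩; exact h i)
    ((convex_Iic c).affine_preimage (Fmap d hd A hA p r))

lemma hull_ge {d n : ℕ} (hd : 2 ≤ d) {A : Fin d → Fin (d - 1) → ℝ}
    (hA : AffineIndependent ℝ A) (p : ℝ) (r : ℤ) {g : Fin n → (Fin d → ℝ)} {c : ℝ}
    (h : ∀ i, c ≤ Fmap d hd A hA p r (g i)) :
    convexHull ℝ (Set.range g) ⊆ (Fmap d hd A hA p r) ⁻¹' Set.Ici c :=
  convexHull_min (by rintro _ ⟨i, rfl⟩; exact h i)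
    ((convex_Ici c).affine_preimage (Fmap d hd A hA p r))

lemma dist_shift {d : ℕ} (hd : 2 ≤ d) (x : Fin d → ℝ) {t : ℝ} (ht : 0 ≤ t) :
    dist (x + t • (Pi.single (li d hd) 1 : Fin d → ℝ)) x ≤ t := by
  rw [dist_pi_le_iff ht]
  intro i
  rcases eq_or_ne i (li d hd) with h | h
  · subst h
    simp [Real.dist_eq, abs_of_nonneg ht]
  · simp [Real.dist_eq, Pi.single_eq_of_ne h]
    exact ht

lemma interior_lt {d : ℕ} (hd : 2 ≤ d) {A : Fin d → Fin (d - 1) → ℝ}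
    (hA : AffineIndependent ℝ A) {p : ℝ} (hp : 0 < p) (r : ℤ) {S : Set (Fin d → ℝ)}
    {c : ℝ} (hS : S ⊆ (Fmap d hd A hA p r) ⁻¹' Set.Iic c) {x : Fin d → ℝ}
    (hx : x ∈ interior S) : Fmap d hd A hA p r x < c := by
  obtain ⟨ε, hε, hball⟩ := Metric.mem_nhds_iff.mp (mem_interior_iff_mem_nhds.mp hx)
  set y := x + (ε/2) • (Pi.single (li d hd) 1 : Fin d → ℝ) with hy
  have hyS : y ∈ S := hball (by
    have := dist_shift hd x (le_of_lt (half_pos hε))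
    exact Metric.mem_ball.mpr (lt_of_le_of_lt this (half_lt_self hε)))
  have h1 : Fmap d hd A hA p r y ≤ c := hS hyS
  rw [hy, Fmap_shift] at h1
  have h2 : 0 < (ε/2) * p⁻¹ := by positivity
  linarith

lemma interior_gt {d : ℕ} (hd : 2 ≤ d) {A : Fin d → Fin (d - 1) → ℝ}
    (hA : AffineIndependent ℝ A) {p : ℝ} (hp : 0 < p) (r : ℤ) {S : Set (Fin d → ℝ)}
    {c : ℝ} (hS : S ⊆ (Fmap d hd A hA p r) ⁻¹' Set.Ici c) {x : Fin d → ℝ}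
    (hx : x ∈ interior S) : c < Fmap d hd A hA p r x := by
  obtain ⟨ε, hε, hball⟩ := Metric.mem_nhds_iff.mp (mem_interior_iff_mem_nhds.mp hx)
  set y := x + (-(ε/2)) • (Pi.single (li d hd) 1 : Fin d → ℝ) with hy
  have hyS : y ∈ S := hball (by
    have h0 : dist y x ≤ ε/2 := by
      rw [dist_pi_le_iff (le_of_lt (half_pos hε))]
      intro i
      rcases eq_or_ne i (li d hd) with h | h
      · subst h
        simp [hy, Real.dist_eq, abs_of_nonneg (le_of_lt hε)]
      · simp [hy, Real.dist_eq, Pi.single_eq_of_ne h]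
        exact le_of_lt (half_pos hε)
    exact Metric.mem_ball.mpr (lt_of_le_of_lt h0 (half_lt_self hε)))
  have h1 : c ≤ Fmap d hd A hA p r y := hS hyS
  rw [hy, Fmap_shift] at h1
  have h2 : 0 < (ε/2) * p⁻¹ := by positivity
  nlinarith

end Stmt16Aux


namespace Stmt16Aux

lemma Lsimp_le {d : ℕ} (hd : 2 ≤ d) {A : Fin d → Fin (d - 1) → ℝ}
    (hA : AffineIndependent ℝ A) {p : ℝ} (hp : 0 < p) {z z' : ℤ} (hzz : z < z') :
    Lsimp d A p z ⊆ (Fmap d hd A hA p (z' - 1)) ⁻¹' Set.Iic (((z' - 1 : ℤ) : ℝ)) := by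
  apply hull_le
  intro i
  rw [Fmap_Bpt d hd A hA p (ne_of_gt hp)]
  have hi : ((i : ℕ) : ℤ) ≤ (d : ℤ) := by
    have := i.isLt
    omega
  exact_mod_cast FB_le_of_lt hd hzz (Int.ofNat_nonneg _) hi

lemma Lsimp_ge {d : ℕ} (hd : 2 ≤ d) {A : Fin d → Fin (d - 1) → ℝ}
    (hA : AffineIndependent ℝ A) {p : ℝ} (hp : 0 < p) (z' : ℤ) :
    Lsimp d A p z' ⊆ (Fmap d hd A hA p (z' - 1)) ⁻¹' Set.Ici (((z' - 1 : ℤ) : ℝ)) := by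
  apply hull_ge
  intro i
  rw [Fmap_Bpt d hd A hA p (ne_of_gt hp)]
  exact_mod_cast FB_ge hd (Int.ofNat_nonneg (i : ℕ))

lemma disj_aux {d : ℕ} (hd : 2 ≤ d) {A : Fin d → Fin (d - 1) → ℝ}
    (hA : AffineIndependent ℝ A) {p : ℝ} (hp : 0 < p) {z z' : ℤ} (hzz : z < z') :
    interior (Lsimp d A p z) ∩ interior (Lsimp d A p z') = ∅ := by
  rw [Set.eq_empty_iff_forall_notMem]
  rintro x ⟨h1, h2⟩
  have ha := interior_lt hd hA hp (z' - 1) (Lsimp_le hd hA hp hzz) h1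
  have hb := interior_gt hd hA hp (z' - 1) (Lsimp_ge hd hA hp z') h2
  linarith

end Stmt16Aux

namespace Stmt16Aux

lemma facet_sub {d : ℕ} (hd : 2 ≤ d) (A : Fin d → Fin (d - 1) → ℝ) (p : ℝ) (z : ℤ) :
    convexHull ℝ (Set.range fun i : Fin d => Bpt d A p (z + 1 + (i : ℕ))) ⊆
      Lsimp d A p z ∩ Lsimp d A p (z + 1) := by
  apply Set.subset_inter
  · apply convexHull_mono
    rintro _ ⟨i, rfl⟩
    refine ⟨i.succ, ?_⟩
    show Bpt d A p (z + ((i.succ : Fin (d + 1)) : ℕ)) = Bpt d A p (z + 1 + (i : ℕ))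
    congr 1
    rw [Fin.val_succ]
    push_cast
    ring
  · apply convexHull_mono
    rintro _ ⟨i, rfl⟩
    refine ⟨i.castSucc, ?_⟩
    show Bpt d A p (z + 1 + ((i.castSucc : Fin (d + 1)) : ℕ)) = Bpt d A p (z + 1 + (i : ℕ))
    congr 1

lemma part2_sub {d : ℕ} (hd : 2 ≤ d) {A : Fin d → Fin (d - 1) → ℝ}
    (hA : AffineIndependent ℝ A) {p : ℝ} (hp : 0 < p) (z : ℤ) :
    Lsimp d A p z ∩ Lsimp d A p (z + 1) ⊆
      convexHull ℝ (Set.range fun i : Fin d => Bpt d A p (z + 1 + (i : ℕ))) := by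
  classical
  rintro x ⟨hx1, hx2⟩
  have e1 : (z + 1 - 1 : ℤ) = z := by ring
  have hle : Fmap d hd A hA p z x ≤ ((z : ℤ) : ℝ) := by
    have := Lsimp_le hd hA hp (z := z) (z' := z + 1) (by omega) hx1
    rw [e1] at this
    exact this
  have hge : ((z : ℤ) : ℝ) ≤ Fmap d hd A hA p z x := by
    have := Lsimp_ge hd hA hp (z + 1) hx2
    rw [e1] at this
    exact this
  have heq : Fmap d hd A hA p z x = ((z : ℤ) : ℝ) := le_antisymm hle hge
  rw [Lsimp, convexHull_range_eq_exists_affineCombination] at hx1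
  obtain ⟨s, w, hw0, hw1, hx⟩ := hx1
  set g : Fin (d + 1) → (Fin d → ℝ) := fun i => Bpt d A p (z + (i : ℕ)) with hg
  set v : Fin (d + 1) → ℝ := fun i => ((FB d z (z + (i : ℕ)) : ℤ) : ℝ) with hv
  have hFg : ∀ i : Fin (d + 1), Fmap d hd A hA p z (g i) = v i := fun i =>
    Fmap_Bpt d hd A hA p (ne_of_gt hp) z _
  have hvle : ∀ i : Fin (d + 1), v i ≤ ((z : ℤ) : ℝ) := by
    intro i
    have hi : ((i : ℕ) : ℤ) ≤ (d : ℤ) := by have := i.isLt; omega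
    have := FB_le_of_lt hd (z := z) (z' := z + 1) (by omega) (Int.ofNat_nonneg (i : ℕ)) hi
    rw [e1] at this
    simp only [hv]
    exact_mod_cast this
  have hsum : ∑ i ∈ s, w i • v i = ((z : ℤ) : ℝ) := by
    rw [← heq, ← hx, Finset.map_affineCombination s g w hw1,
      Finset.affineCombination_eq_linear_combination s _ w hw1]
    exact Finset.sum_congr rfl fun i _ => by rw [Function.comp_apply, hFg]
  have hzero : ∀ i ∈ s, w i * (((z : ℤ) : ℝ) - v i) = 0 := by
    have hs0 : ∑ i ∈ s, w i * (((z : ℤ) : ℝ) - v i) = 0 := by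
      have : ∑ i ∈ s, w i * (((z : ℤ) : ℝ) - v i)
          = (∑ i ∈ s, w i) * ((z : ℤ) : ℝ) - ∑ i ∈ s, w i • v i := by
        rw [Finset.sum_mul, ← Finset.sum_sub_distrib]
        exact Finset.sum_congr rfl fun i _ => by simp [mul_sub]
      rw [this, hw1, hsum]
      ring
    intro i hi
    refine (Finset.sum_eq_zero_iff_of_nonneg ?_).mp hs0 i hi
    intro j hj
    have := hvle j
    have := hw0 j hj
    nlinarith
  have hne0 : ∀ i ∈ s, w i ≠ 0 → i ≠ (0 : Fin (d + 1)) := by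
    intro i hi hwi h0
    have hv0 : v i = ((z : ℤ) : ℝ) := by
      have := hzero i hi
      rcases mul_eq_zero.mp this with h | h
      · exact absurd h hwi
      · linarith
    rw [h0] at hv0
    have : ((FB d z (z + ((0 : Fin (d + 1)) : ℕ)) : ℤ) : ℝ) = ((z : ℤ) : ℝ) := hv0
    have h2 : FB d z (z + ((0 : Fin (d + 1)) : ℕ)) = z := by exact_mod_cast this
    rw [show (((0 : Fin (d + 1)) : ℕ) : ℤ) = 0 by simp, add_zero, FB_self hd] at h2
    omega
  set s' := s.filter (fun i => w i ≠ 0) with hs'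
  have hsum' : ∑ i ∈ s', w i = 1 := by
    rw [hs', Finset.sum_filter_ne_zero]
    exact hw1
  have hxcm : x = s'.centerMass w g := by
    rw [Finset.centerMass_eq_of_sum_1 _ _ hsum', ← hx,
      Finset.affineCombination_eq_linear_combination s _ w hw1]
    refine (Finset.sum_filter_of_ne ?_).symm
    intro i _ hne
    intro hwi
    rw [hwi, zero_smul] at hne
    exact hne rfl
  rw [hxcm]
  apply Finset.centerMass_mem_convexHull
  · intro i hi
    exact hw0 i (Finset.mem_filter.mp hi).1
  · rw [hsum']
    exact one_pos
  · intro i hi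
    obtain ⟨his, hwi⟩ := Finset.mem_filter.mp hi
    have hine : i ≠ 0 := hne0 i his hwi
    have hival : 1 ≤ (i : ℕ) := by
      rcases Nat.eq_zero_or_pos (i : ℕ) with h | h
      · exact absurd (Fin.ext h) hine
      · exact h
    refine ⟨i.pred hine, ?_⟩
    show Bpt d A p (z + 1 + ((i.pred hine : ℕ) : ℤ)) = g i
    rw [hg]
    congr 1
    rw [Fin.coe_pred]
    push_cast [Nat.cast_sub hival]
    ring
end Stmt16Aux

/-- If `A_0, …, A_{d−1}` are affinely independent and `p > 0`, then distinct
simplices `L_z, L_{z'}` have disjoint interiors, and consecutive simplices meet in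
the common facet `conv{B_{z+1}, …, B_{z+d}}`. -/
theorem stmt16 (d : ℕ) (hd : 2 ≤ d) (A : Fin d → Fin (d - 1) → ℝ) (p : ℝ)
    (hA : AffineIndependent ℝ A) (hp : 0 < p) :
    (∀ z z' : ℤ, z ≠ z' →
        interior (Lsimp d A p z) ∩ interior (Lsimp d A p z') = ∅) ∧
      ∀ z : ℤ, Lsimp d A p z ∩ Lsimp d A p (z + 1) =
        convexHull ℝ (Set.range fun i : Fin d => Bpt d A p (z + 1 + (i : ℕ))) := by
  constructor
  · intro z z' hne
    rcases lt_or_gt_of_ne hne with h | h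
    · exact Stmt16Aux.disj_aux hd hA hp h
    · rw [Set.inter_comm]
      exact Stmt16Aux.disj_aux hd hA hp h
  · intro z
    exact Set.Subset.antisymm (Stmt16Aux.part2_sub hd hA hp z)
      (Stmt16Aux.facet_sub hd A p z)
end
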